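/- Let Λ be a finite group of cardinality ℓ ≥ 3 with a bijection ‖·‖ : Λ → {0,…,ℓ−1}, G = (⊕_ℤ Λ) ⋊ ℤ, 𝔫(μ tᵏ) = Σ_{n≥k} ‖μ_n‖ ℓ^{n−k}, b_ℓ : ℕ → Bool the parity of the number of 1s in base ℓ, and σ₀ = b_ℓ ∘ 𝔫 : G → Bool. Then for every g ∈ G, the value σ₀(g) is the strict non-unanimous majority value of σ₀ on the role model set ℜℳ(g) = g t⁻¹ Λ₀: among the ℓ elements of ℜℳ(g), strictly more than ℓ/2 but strictly fewer than ℓ of them are mapped by σ₀ to σ₀(g). -/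

import Mathlib

/-- The subgroup of finitely supported functions `ℤ → Λ`, i.e. `⊕_ℤ Λ`. -/
def FinSupp (Λ : Type*) [Group Λ] : Subgroup (ℤ → Λ) where
  carrier := {f | (Function.mulSupport f).Finite}
  one_mem' := by simpa using Set.finite_empty
  mul_mem' := fun hf hg => ((hf.union hg).subset (Function.mulSupport_mul _ _))
  inv_mem' := fun hf => by simpa using hf

/-- The shift automorphism of `⊕_ℤ Λ` by `k`: `(shift k f) n = f (n - k)`. -/
def shiftAut (Λ : Type*) [Group Λ] (k : ℤ) : MulAut (FinSupp Λ) where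
  toFun f := ⟨fun n => f.val (n - k), (f.prop.image (· + k)).subset (by
    intro n hn
    exact ⟨n - k, hn, by ring⟩)⟩
  invFun f := ⟨fun n => f.val (n + k), (f.prop.image (· - k)).subset (by
    intro n hn
    exact ⟨n + k, hn, by ring⟩)⟩
  left_inv f := by ext n; simp
  right_inv f := by ext n; simp
  map_mul' f g := rfl

/-- The lamplighter group `G = (⊕_ℤ Λ) ⋊ ℤ`, with the generator of `ℤ` acting by the
shift `t [λ]_i t⁻¹ = [λ]_{i+1}`. -/
abbrev Lamp (Λ : Type*) [Group Λ] :=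
  SemidirectProduct (FinSupp Λ) (Multiplicative ℤ) (zpowersHom _ (shiftAut Λ 1))

/-- The generator `t` of the `ℤ` factor of the lamplighter group. -/
def tGen (Λ : Type*) [Group Λ] : Lamp Λ :=
  SemidirectProduct.inr (Multiplicative.ofAdd 1)

/-- `[λ]_i`: the element of `⊕_ℤ Λ` supported at coordinate `i` with value `λ`. -/
def lam {Λ : Type*} [Group Λ] (i : ℤ) (x : Λ) : FinSupp Λ :=
  ⟨fun n => if n = i then x else 1, (Set.finite_singleton i).subset (by
    intro n hn
    by_contra h
    exact hn (if_neg h))⟩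

/-- `𝔫(μ tᵏ) = Σ_{n ≥ k, n ∈ supp μ} ‖μ_n‖ ℓ^{n−k}`. -/
noncomputable def nval {Λ : Type*} [Group Λ] (norm : Λ → ℕ) (ℓ : ℕ) (g : Lamp Λ) : ℕ :=
  ∑ n ∈ (g.left.prop.toFinset.filter (fun n => Multiplicative.toAdd g.right ≤ n)),
    norm (g.left.val n) * ℓ ^ (n - Multiplicative.toAdd g.right).toNat

/-- `b ℓ n` is `true` iff the number of `1`s in the base-`ℓ` expansion of `n` is odd. -/
def bSeq (ℓ n : ℕ) : Bool := decide (((Nat.digits ℓ n).count 1) % 2 = 1)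

section Aux
variable {Λ : Type*} [Group Λ]

lemma shiftAut_mul (a b : ℤ) : shiftAut Λ a * shiftAut Λ b = shiftAut Λ (a + b) := by
  refine MulEquiv.ext fun f => Subtype.ext (funext fun n => ?_)
  show f.val (n - a - b) = f.val (n - (a + b))
  congr 1; ring

def shiftHom (Λ : Type*) [Group Λ] : Multiplicative ℤ →* MulAut (FinSupp Λ) where
  toFun m := shiftAut Λ (Multiplicative.toAdd m)
  map_one' := by
    refine MulEquiv.ext fun f => Subtype.ext (funext fun n => ?_)
    show f.val (n - 0) = f.val n
    simp
  map_mul' a b := by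
    rw [shiftAut_mul]
    congr 1

lemma zpowersHom_shift (Λ : Type*) [Group Λ] :
    zpowersHom (MulAut (FinSupp Λ)) (shiftAut Λ 1) = shiftHom Λ := by
  refine MonoidHom.ext_mint ?_
  simp [shiftHom]

lemma lamp_right (g : Lamp Λ) (x : Λ) :
    Multiplicative.toAdd (g * (tGen Λ)⁻¹ * SemidirectProduct.inl (lam 0 x)).right
      = Multiplicative.toAdd g.right - 1 := by
  simp only [SemidirectProduct.mul_right, SemidirectProduct.right_inl,
    SemidirectProduct.inv_right, tGen, SemidirectProduct.right_inr, mul_one, toAdd_mul,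
    toAdd_inv, toAdd_ofAdd]
  ring

lemma lamp_left (g : Lamp Λ) (x : Λ) (n : ℤ) :
    ((g * (tGen Λ)⁻¹ * SemidirectProduct.inl (lam 0 x)).left).val n
      = g.left.val n * (if n = Multiplicative.toAdd g.right - 1 then x else 1) := by
  have hb : ∀ (b : Multiplicative ℤ) (f : FinSupp Λ),
      ((zpowersHom (MulAut (FinSupp Λ)) (shiftAut Λ 1)) b) f
        = shiftAut Λ (Multiplicative.toAdd b) f := fun b f => by
    rw [zpowersHom_shift]; rfl
  have h1 : (g * (tGen Λ)⁻¹).left = g.left := by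
    rw [SemidirectProduct.mul_left]
    have : ((tGen Λ)⁻¹).left = 1 := by
      simp [tGen, SemidirectProduct.inv_left]
    rw [this, map_one, mul_one]
  have h2 : Multiplicative.toAdd (g * (tGen Λ)⁻¹).right = Multiplicative.toAdd g.right - 1 := by
    simp only [SemidirectProduct.mul_right, SemidirectProduct.inv_right, tGen,
      SemidirectProduct.right_inr, toAdd_mul, toAdd_inv, toAdd_ofAdd]
    ring
  rw [SemidirectProduct.mul_left, h1, SemidirectProduct.left_inl, hb]
  show g.left.val n * (lam 0 x).val (n - Multiplicative.toAdd (g * (tGen Λ)⁻¹).right) = _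
  rw [h2]
  show g.left.val n * (if n - (Multiplicative.toAdd g.right - 1) = 0 then x else 1) = _
  congr 1
  rcases eq_or_ne n (Multiplicative.toAdd g.right - 1) with h | h
  · simp [h]
  · rw [if_neg (by omega), if_neg h]

end Aux

section Aux2
variable {Λ : Type*} [Group Λ]

lemma nval_eq_sum (norm : Λ → ℕ) (h1 : norm 1 = 0) (ℓ : ℕ) (g : Lamp Λ) (S : Finset ℤ)
    (hS : ∀ n, g.left.val n ≠ 1 → Multiplicative.toAdd g.right ≤ n → n ∈ S) :
    nval norm ℓ g = ∑ n ∈ S.filter (fun n => Multiplicative.toAdd g.right ≤ n),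
      norm (g.left.val n) * ℓ ^ (n - Multiplicative.toAdd g.right).toNat := by
  refine Finset.sum_subset ?_ ?_
  · intro n hn
    simp only [Finset.mem_filter, Set.Finite.mem_toFinset, Function.mem_mulSupport] at hn ⊢
    exact ⟨hS n ((Set.Finite.mem_toFinset _).mp hn.1) hn.2, hn.2⟩
  · intro n hn hn'
    simp only [Finset.mem_filter, Set.Finite.mem_toFinset, Function.mem_mulSupport] at hn hn'
    have : g.left.val n = 1 := by
      by_contra h
      exact hn' ⟨(Set.Finite.mem_toFinset _).mpr h, hn.2⟩
    rw [this, h1, zero_mul]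

lemma nval_step (norm : Λ → ℕ) (h1 : norm 1 = 0) (ℓ : ℕ) (g : Lamp Λ) (x : Λ) :
    nval norm ℓ (g * (tGen Λ)⁻¹ * SemidirectProduct.inl (lam 0 x))
      = norm (g.left.val (Multiplicative.toAdd g.right - 1) * x) + ℓ * nval norm ℓ g := by
  set k := Multiplicative.toAdd g.right with hk
  set h := g * (tGen Λ)⁻¹ * SemidirectProduct.inl (lam 0 x) with hh
  set T := g.left.prop.toFinset.filter (fun n => k ≤ n) with hT
  have hkT : (k - 1) ∉ T := by
    simp only [hT, Finset.mem_filter]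
    rintro ⟨-, h2⟩; omega
  have hs := nval_eq_sum norm h1 ℓ h (insert (k-1) T) ?_
  · rw [hs]
    have hfilt : (insert (k-1) T).filter
        (fun n => Multiplicative.toAdd h.right ≤ n) = insert (k-1) T := by
      apply Finset.filter_true_of_mem
      intro n hn
      rw [lamp_right]
      rcases Finset.mem_insert.mp hn with h' | h'
      · omega
      · simp only [hT, Finset.mem_filter] at h'; omega
    rw [hfilt, Finset.sum_insert hkT]
    congr 1
    · rw [lamp_left, lamp_right, ← hk]
      simp
    · unfold nval
      rw [← hk, Finset.mul_sum]
      refine Finset.sum_congr hT ?_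
      intro n hn
      simp only [Finset.mem_filter] at hn
      rw [lamp_left, lamp_right, ← hk, if_neg (by omega : ¬ n = k - 1), mul_one]
      have hpow : (n - (k - 1)).toNat = (n - k).toNat + 1 := by omega
      rw [hpow, pow_succ]
      ring
  · intro n hn hn'
    rw [lamp_right, ← hk] at hn'
    rcases eq_or_ne n (k-1) with h' | h'
    · exact Finset.mem_insert.mpr (Or.inl h')
    · apply Finset.mem_insert.mpr (Or.inr ?_)
      simp only [hT, Finset.mem_filter, Set.Finite.mem_toFinset, Function.mem_mulSupport]
      rw [lamp_left, ← hk, if_neg h', mul_one] at hn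
      exact ⟨(Set.Finite.mem_toFinset _).mpr hn, by omega⟩

lemma bSeq_add_mul {ℓ : ℕ} (hℓ : 2 ≤ ℓ) (r N : ℕ) (hr : r < ℓ) :
    bSeq ℓ (r + ℓ * N) = xor (bSeq ℓ N) (decide (r = 1)) := by
  rcases Nat.eq_zero_or_pos (r + ℓ * N) with h0 | h0
  · have hr0 : r = 0 := by omega
    have hN0 : N = 0 := by
      rcases Nat.mul_eq_zero.mp (by omega : ℓ * N = 0) with h | h
      · omega
      · exact h
    subst hr0 hN0
    simp [bSeq]
  · rw [bSeq, Nat.digits_def' (by omega : 1 < ℓ) h0]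
    have h1 : (r + ℓ * N) % ℓ = r := by
      rw [Nat.add_mul_mod_self_left, Nat.mod_eq_of_lt hr]
    have h2 : (r + ℓ * N) / ℓ = N := by
      rw [Nat.add_mul_div_left _ _ (by omega : 0 < ℓ), Nat.div_eq_of_lt hr, zero_add]
    rw [h1, h2, bSeq]
    rcases eq_or_ne r 1 with hr1 | hr1
    · subst hr1
      simp only [List.count_cons, beq_self_eq_true, if_true, decide_eq_true_eq]
      rcases Nat.mod_two_eq_zero_or_one ((Nat.digits ℓ N).count 1) with h | h <;>
        simp [Nat.add_mod, h]
    · simp only [List.count_cons, hr1, decide_eq_false_iff_not]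
      have : (r == 1) = false := by simpa using hr1
      simp [this, hr1]

end Aux2

/-- with `ℓ ≥ 3`, `σ₀ = b_ℓ ∘ 𝔫` realizes its value at `g` as the
non-unanimous strict majority of its values on the role model set `ℜℳ(g) = g t⁻¹ Λ₀`:
strictly more than `ℓ/2` but strictly fewer than `ℓ` of the `ℓ` elements `g t⁻¹ [λ]₀`
are mapped by `σ₀` to `σ₀(g)`. -/
theorem sigma0_majority {Λ : Type*} [Group Λ] [Fintype Λ] [DecidableEq Λ] {ℓ : ℕ}
    (hℓ : 3 ≤ ℓ) (e : Λ ≃ Fin ℓ) (he : (e 1 : ℕ) = 0) (g : Lamp Λ) :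
    ℓ < 2 * (Finset.univ.filter (fun x : Λ =>
        bSeq ℓ (nval (fun y => (e y : ℕ)) ℓ (g * (tGen Λ)⁻¹ * SemidirectProduct.inl (lam 0 x))) =
          bSeq ℓ (nval (fun y => (e y : ℕ)) ℓ g))).card ∧
    (Finset.univ.filter (fun x : Λ =>
        bSeq ℓ (nval (fun y => (e y : ℕ)) ℓ (g * (tGen Λ)⁻¹ * SemidirectProduct.inl (lam 0 x))) =
          bSeq ℓ (nval (fun y => (e y : ℕ)) ℓ g))).card < ℓ := by
  set norm : Λ → ℕ := fun y => (e y : ℕ) with hnorm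
  set c : Λ := g.left.val (Multiplicative.toAdd g.right - 1) with hc
  set x₀ : Λ := c⁻¹ * e.symm ⟨1, by omega⟩ with hx₀
  have hcard : Fintype.card Λ = ℓ := by
    rw [Fintype.card_congr e, Fintype.card_fin]
  have hset : (Finset.univ.filter (fun x : Λ =>
      bSeq ℓ (nval norm ℓ (g * (tGen Λ)⁻¹ * SemidirectProduct.inl (lam 0 x))) =
        bSeq ℓ (nval norm ℓ g))) = Finset.univ.erase x₀ := by
    rw [← Finset.filter_ne' Finset.univ x₀]
    apply Finset.filter_congr
    intro x _
    rw [nval_step norm (by simp [hnorm, he]) ℓ g x, ← hc,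
      bSeq_add_mul (by omega) _ _ (e (c * x)).isLt]
    constructor
    · intro h
      have hne : ((e (c * x) : ℕ)) ≠ 1 := by
        intro h1
        rw [h1] at h
        cases hb : bSeq ℓ (nval norm ℓ g) <;> rw [hb] at h <;> simp at h
      intro hx
      apply hne
      rw [hx, hx₀, mul_inv_cancel_left, Equiv.apply_symm_apply]
    · intro h
      have hne : ((e (c * x) : ℕ)) ≠ 1 := by
        intro h1
        apply h
        rw [hx₀]
        have : e (c * x) = ⟨1, by omega⟩ := Fin.ext h1
        rw [eq_inv_mul_iff_mul_eq, ← this, Equiv.symm_apply_apply]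
      simp [hne]
  rw [hset, Finset.card_erase_of_mem (Finset.mem_univ _), Finset.card_univ, hcard]
  omega
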